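/- Let L/K be a quadratic extension of fields of characteristic not 2 with Galois group generated by σ, and let E/K be an elliptic curve such that E(L) has a subgroup ⟨Q, P⟩ ≅ ℤ/2ℤ ⊕ ℤ/32ℤ with Q of order 2 and P of order 32, where Q and 4P are fixed by σ but 2P is not fixed by σ. Then a contradiction follows; that is, if Q and 4P are K-rational and ⟨Q, P⟩ ⊆ E(L), then 2P is also K-rational. -/

import Mathlib

open WeierstrassCurve WeierstrassCurve.Affine

open Classical in
/-- Let `L/K` be a quadratic extension of fields of characteristic not 2 with
Galois group generated by `σ`, and let `E/K` be an elliptic curve such that `E(L)` has a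
subgroup `⟨Q, P⟩ ≅ ℤ/2ℤ ⊕ ℤ/32ℤ` with `Q` of order 2 and `P` of order 32, where `Q` and
`4P` are fixed by `σ`. Then `2P` is also fixed by `σ`, i.e. `2P` is `K`-rational. -/
theorem stmt_8 (K : Type*) [Field K] (hchar : ringChar K ≠ 2)
    (L : Type*) [Field L] [Algebra K L] (hLdeg : Module.finrank K L = 2)
    (σ : L ≃ₐ[K] L) (hσ : σ ≠ AlgEquiv.refl)
    (W : Affine K) (hΔ : W.Δ ≠ 0)
    (Q P : (W.baseChange L).Point) (hQ : addOrderOf Q = 2) (hP : addOrderOf P = 32)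
    (hind : Q ∉ AddSubgroup.zmultiples P)
    (hσP : Point.map (W' := W) σ.toAlgHom P ∈ AddSubgroup.closure ({Q, P} : Set (W.baseChange L).Point))
    (hQfix : Point.map (W' := W) σ.toAlgHom Q = Q)
    (h4P : Point.map (W' := W) σ.toAlgHom (4 • P) = 4 • P) :
    Point.map (W' := W) σ.toAlgHom (2 • P) = 2 • P := by
  have hfd : FiniteDimensional K L :=
    FiniteDimensional.of_finrank_pos (by rw [hLdeg]; norm_num)
  -- σ has order 2
  have hcard : Fintype.card (L ≃ₐ[K] L) ≤ 2 := by
    calc Fintype.card (L ≃ₐ[K] L) ≤ Fintype.card (L →ₐ[K] L) :=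
          Fintype.card_le_of_injective (fun e => e.toAlgHom)
            (fun a b h => by ext x; exact congrArg (fun f => f x) h)
      _ ≤ Module.finrank L (L →ₗ[K] L) := finrank_algHom K L
      _ = Module.finrank K L := Module.finrank_linearMap_self K L L
      _ = 2 := hLdeg
  have hσσ : ∀ x : L, σ (σ x) = x := by
    have hpos : 0 < Fintype.card (L ≃ₐ[K] L) := Fintype.card_pos
    have hsq : σ ^ 2 = 1 := by
      rcases Nat.lt_or_ge (Fintype.card (L ≃ₐ[K] L)) 2 with h | h
      · exfalso
        have h1 : Fintype.card (L ≃ₐ[K] L) ≤ 1 := by omega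
        exact hσ (Fintype.card_le_one_iff.mp h1 σ AlgEquiv.refl)
      · have hc2 : Fintype.card (L ≃ₐ[K] L) = 2 := le_antisymm hcard h
        rw [← hc2]
        exact pow_card_eq_one
    intro x
    have := congrArg (fun f : L ≃ₐ[K] L => f x) hsq
    simpa [pow_two, AlgEquiv.mul_apply] using this
  have key : ∀ x : (W.baseChange L).Point,
      Point.map (W' := W) σ.toAlgHom (Point.map (W' := W) σ.toAlgHom x) = x := by
    rintro (_ | @⟨x, y, h⟩)
    · rfl
    · rw [Point.map_some, Point.map_some, Point.some.injEq]
      exact ⟨hσσ x, hσσ y⟩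
  -- decompose σP
  obtain ⟨m, n, hmn⟩ := AddSubgroup.mem_closure_pair.mp hσP
  have hQ2 : (2 : ℤ) • Q = 0 := by
    have h2 : ((addOrderOf Q : ℤ)) ∣ 2 := by rw [hQ]; norm_num
    exact addOrderOf_dvd_iff_zsmul_eq_zero.mp h2
  have hPdvd : ∀ b : ℤ, b • P = 0 ↔ (32 : ℤ) ∣ b := by
    intro b
    rw [← addOrderOf_dvd_iff_zsmul_eq_zero, hP]
    norm_cast
  have indep : ∀ a b : ℤ, a • Q + b • P = 0 → (32 : ℤ) ∣ b := by
    intro a b h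
    rcases Int.even_or_odd a with ⟨c, hc⟩ | ⟨c, hc⟩
    · have haQ : a • Q = 0 := by
        have h1 : a • Q = c • ((2 : ℤ) • Q) := by rw [hc]; module
        rw [h1, hQ2, smul_zero]
      rw [haQ, zero_add] at h
      exact (hPdvd b).mp h
    · have haQ : a • Q = Q := by
        have h1 : a • Q = c • ((2 : ℤ) • Q) + Q := by rw [hc]; module
        rw [h1, hQ2, smul_zero, zero_add]
      rw [haQ] at h
      exact absurd (AddSubgroup.mem_zmultiples_iff.mpr
        ⟨-b, by rw [neg_smul]; exact neg_eq_of_add_eq_zero_left h⟩) hind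
  have hcastP : ∀ c : ℕ, (c • P : (W.baseChange L).Point) = (c : ℤ) • P := fun c =>
    (natCast_zsmul P c).symm
  -- equation from h4P
  have e4 : (32 : ℤ) ∣ 4 * n - 4 := by
    apply indep (4 * m)
    have h4 : (4 : ℤ) • (m • Q + n • P) = (4 : ℤ) • P := by
      rw [hmn]
      have h := h4P
      rw [hcastP 4, map_zsmul] at h
      exact_mod_cast h
    have hmod : (4 * m) • Q + (4 * n - 4) • P
        = (4 : ℤ) • (m • Q + n • P) - (4 : ℤ) • P := by module
    rw [hmod, h4, sub_self]
  -- equation from σ² = id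
  have e2 : (32 : ℤ) ∣ n * n - 1 := by
    apply indep (m + n * m)
    have hσ2 : m • Q + n • (m • Q + n • P) = P := by
      have h := key P
      rw [← hmn, map_add, map_zsmul, map_zsmul, hQfix, ← hmn] at h
      exact h
    have hmod : (m + n * m) • Q + (n * n - 1) • P
        = (m • Q + n • (m • Q + n • P)) - P := by module
    rw [hmod, hσ2, sub_self]
  -- conclude 16 ∣ n - 1
  have e16 : (32 : ℤ) ∣ 2 * n - 2 := by
    obtain ⟨k, hk⟩ : (8 : ℤ) ∣ n - 1 := by omega
    have hn : n = 8 * k + 1 := by omega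
    obtain ⟨j, hj⟩ := e2
    have h64 : 64 * (k * k) + 16 * k = 32 * j := by
      have h' : (8 * k + 1) * (8 * k + 1) - 1 = 32 * j := by rw [← hn]; exact hj
      linear_combination h'
    obtain ⟨t, ht⟩ : (2 : ℤ) ∣ k := by
      have h16 : 16 * k = 32 * (j - 2 * (k * k)) := by linarith
      omega
    exact ⟨t, by omega⟩
  -- finish
  have hgoal : (2 * m) • Q + (2 * n - 2) • P = 0 := by
    have h1 : (2 * m) • Q = 0 := by
      have := congrArg (fun z => m • z) hQ2
      simpa [smul_smul, mul_comm] using this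
    have h2 : (2 * n - 2) • P = 0 := (hPdvd _).mpr e16
    rw [h1, h2, add_zero]
  have hz : Point.map (W' := W) σ.toAlgHom ((2 : ℤ) • P) = (2 : ℤ) • P := by
    rw [map_zsmul, ← hmn]
    calc (2 : ℤ) • (m • Q + n • P)
        = (2 * m) • Q + (2 * n - 2) • P + (2 : ℤ) • P := by module
      _ = (2 : ℤ) • P := by rw [hgoal, zero_add]
  rw [hcastP 2]
  exact_mod_cast hz
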